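/- Let R be a ring, M a right R-module, W = End_R(M), and α an anti-endomorphism of W such that α ∘ α is an inner automorphism of W. Then b_α is right regular if and only if it is left regular, and b_α is right injective if and only if it is left injective. -/

import Mathlib

open MulOpposite TensorProduct Function

universe u v w v'

section Core

/-- An anti-endomorphism of a ring: additive, unital, reverses multiplication. -/
def IsAntiEndo {W : Type*} [Ring W] (α : W → W) : Prop :=
  (∀ u v : W, α (u + v) = α u + α v) ∧ α 1 = 1 ∧ ∀ u v : W, α (u * v) = α v * α u

/-- An anti-automorphism of a ring: a bijective anti-endomorphism. -/
def IsAntiAuto {W : Type*} [Ring W] (α : W → W) : Prop :=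
  IsAntiEndo α ∧ Function.Bijective α

/-- An inner automorphism of a ring: conjugation by a unit. -/
def IsInnerAut {W : Type*} [Ring W] (φ : W → W) : Prop :=
  ∃ u : Wˣ, ∀ w : W, φ w = ↑u * w * ↑u⁻¹

variable (R : Type u) [Ring R]

/-- A double `R`-module structure on the additive group `K`: two commuting
right `R`-module structures `m0` and `m1`. -/
structure DoubleModule (K : Type v) [AddCommGroup K] where
  m0 : K → R → K
  m1 : K → R → K
  m0_add_left : ∀ (k k' : K) (r : R), m0 (k + k') r = m0 k r + m0 k' r
  m0_add_right : ∀ (k : K) (r r' : R), m0 k (r + r') = m0 k r + m0 k r'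
  m0_mul : ∀ (k : K) (r r' : R), m0 k (r * r') = m0 (m0 k r) r'
  m0_one : ∀ k : K, m0 k 1 = k
  m1_add_left : ∀ (k k' : K) (r : R), m1 (k + k') r = m1 k r + m1 k' r
  m1_add_right : ∀ (k : K) (r r' : R), m1 k (r + r') = m1 k r + m1 k r'
  m1_mul : ∀ (k : K) (r r' : R), m1 k (r * r') = m1 (m1 k r) r'
  m1_one : ∀ k : K, m1 k 1 = k
  comm : ∀ (k : K) (a b : R), m1 (m0 k a) b = m0 (m1 k b) a

variable {R}

/-- A homomorphism of double `R`-modules. -/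
def IsDoubleHom {K : Type v} {K' : Type w} [AddCommGroup K] [AddCommGroup K']
    (DK : DoubleModule R K) (DK' : DoubleModule R K') (f : K → K') : Prop :=
  (∀ k k' : K, f (k + k') = f k + f k') ∧
  (∀ (k : K) (r : R), f (DK.m0 k r) = DK'.m0 (f k) r) ∧
  (∀ (k : K) (r : R), f (DK.m1 k r) = DK'.m1 (f k) r)

/-- An isomorphism of double `R`-modules. -/
def IsDoubleIso {K : Type v} {K' : Type w} [AddCommGroup K] [AddCommGroup K']
    (DK : DoubleModule R K) (DK' : DoubleModule R K') (f : K → K') : Prop :=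
  IsDoubleHom DK DK' f ∧ Function.Bijective f

/-- An anti-automorphism of a double `R`-module: an additive bijection exchanging
the two module structures. -/
def IsDoubleAntiAuto {K : Type v} [AddCommGroup K] (DK : DoubleModule R K) (θ : K → K) : Prop :=
  Function.Bijective θ ∧ (∀ k k' : K, θ (k + k') = θ k + θ k') ∧
  (∀ (k : K) (r : R), θ (DK.m0 k r) = DK.m1 (θ k) r) ∧
  (∀ (k : K) (r : R), θ (DK.m1 k r) = DK.m0 (θ k) r)

variable (R)

/-- A general bilinear form on a right `R`-module `M` (encoded as a module over `Rᵐᵒᵖ`)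
with values in a double `R`-module `(K, DK)`. -/
structure GBF (M : Type v) [AddCommGroup M] [Module Rᵐᵒᵖ M]
    (K : Type w) [AddCommGroup K] (DK : DoubleModule R K) where
  b : M → M → K
  add_left : ∀ x x' y : M, b (x + x') y = b x y + b x' y
  add_right : ∀ x y y' : M, b x (y + y') = b x y + b x y'
  smul_left : ∀ (x y : M) (r : R), b (op r • x) y = DK.m0 (b x y) r
  smul_right : ∀ (x y : M) (r : R), b x (op r • y) = DK.m1 (b x y) r

variable {R}

namespace GBF

variable {M : Type v} [AddCommGroup M] [Module Rᵐᵒᵖ M]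
  {K : Type w} [AddCommGroup K] {DK : DoubleModule R K}

/-- The right adjoint of `β` is injective. -/
def RightInjective (β : GBF R M K DK) : Prop :=
  ∀ x x' : M, (∀ y : M, β.b y x = β.b y x') → x = x'

/-- The right adjoint of `β` is bijective onto `Hom_R(M, K₀)`. -/
def RightRegular (β : GBF R M K DK) : Prop :=
  β.RightInjective ∧
  ∀ f : M → K, (∀ y y' : M, f (y + y') = f y + f y') →
    (∀ (y : M) (r : R), f (op r • y) = DK.m0 (f y) r) →
    ∃ x : M, ∀ y : M, f y = β.b y x

/-- The left adjoint of `β` is injective. -/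
def LeftInjective (β : GBF R M K DK) : Prop :=
  ∀ x x' : M, (∀ y : M, β.b x y = β.b x' y) → x = x'

/-- The left adjoint of `β` is bijective onto `Hom_R(M, K₁)`. -/
def LeftRegular (β : GBF R M K DK) : Prop :=
  β.LeftInjective ∧
  ∀ f : M → K, (∀ y y' : M, f (y + y') = f y + f y') →
    (∀ (y : M) (r : R), f (op r • y) = DK.m1 (f y) r) →
    ∃ x : M, ∀ y : M, f y = β.b x y

/-- `α` is an adjoint anti-endomorphism for `β`: `β(w x, y) = β(x, α(w) y)`. -/
def IsAdjoint (β : GBF R M K DK) (α : Module.End Rᵐᵒᵖ M → Module.End Rᵐᵒᵖ M) : Prop :=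
  ∀ (w : Module.End Rᵐᵒᵖ M) (x y : M), β.b (w x) y = β.b x (α w y)

/-- Similarity of general bilinear forms on the same module. -/
def Similar {K' : Type v'} [AddCommGroup K'] {DK' : DoubleModule R K'}
    (β : GBF R M K DK) (β' : GBF R M K' DK') : Prop :=
  ∃ f : K → K', IsDoubleIso DK DK' f ∧ ∀ x y : M, β'.b x y = f (β.b x y)

end GBF

section Kalpha

variable {M : Type v} [AddCommGroup M] [Module Rᵐᵒᵖ M]

/-- The subgroup of `M ⊗_ℤ M` generated by the elements `(w x) ⊗ y - x ⊗ (α w y)`. -/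
def kalphaRel (α : Module.End Rᵐᵒᵖ M → Module.End Rᵐᵒᵖ M) : Submodule ℤ (M ⊗[ℤ] M) :=
  Submodule.span ℤ
    {z | ∃ (w : Module.End Rᵐᵒᵖ M) (x y : M), z = (w x) ⊗ₜ[ℤ] y - x ⊗ₜ[ℤ] (α w y)}

/-- `K_α`, the quotient of `M ⊗_ℤ M` by the relations `(w x) ⊗ y = x ⊗ (α w y)`. -/
abbrev Kalpha (α : Module.End Rᵐᵒᵖ M → Module.End Rᵐᵒᵖ M) : Type _ :=
  (M ⊗[ℤ] M) ⧸ kalphaRel α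

/-- The map `x ⊗ y ↦ (x·r) ⊗ y` on `M ⊗_ℤ M`. -/
noncomputable def smulLeftMap (r : R) : (M ⊗[ℤ] M) →ₗ[ℤ] (M ⊗[ℤ] M) :=
  TensorProduct.map ((DistribMulAction.toAddMonoidHom M (op r : Rᵐᵒᵖ)).toIntLinearMap)
    LinearMap.id

/-- The map `x ⊗ y ↦ x ⊗ (y·r)` on `M ⊗_ℤ M`. -/
noncomputable def smulRightMap (r : R) : (M ⊗[ℤ] M) →ₗ[ℤ] (M ⊗[ℤ] M) :=
  TensorProduct.map LinearMap.id
    ((DistribMulAction.toAddMonoidHom M (op r : Rᵐᵒᵖ)).toIntLinearMap)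

theorem smulLeftMap_tmul (r : R) (x y : M) :
    smulLeftMap (M := M) r (x ⊗ₜ[ℤ] y) = (op r • x) ⊗ₜ[ℤ] y := by
  first | rfl | exact TensorProduct.map_tmul _ _ _ _

theorem smulRightMap_tmul (r : R) (x y : M) :
    smulRightMap (M := M) r (x ⊗ₜ[ℤ] y) = x ⊗ₜ[ℤ] (op r • y) := by
  first | rfl | exact TensorProduct.map_tmul _ _ _ _

theorem kalphaRel_le_left (α : Module.End Rᵐᵒᵖ M → Module.End Rᵐᵒᵖ M) (r : R) :
    kalphaRel α ≤ (kalphaRel α).comap (smulLeftMap (M := M) r) := by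
  rw [kalphaRel, Submodule.span_le]
  rintro _ ⟨w, x, y, rfl⟩
  rw [SetLike.mem_coe, Submodule.mem_comap, map_sub]
  have h1 : smulLeftMap (M := M) r ((w x) ⊗ₜ[ℤ] y) = (w (op r • x)) ⊗ₜ[ℤ] y := by
    rw [smulLeftMap_tmul, map_smul]
  have h2 : smulLeftMap (M := M) r (x ⊗ₜ[ℤ] (α w y)) = (op r • x) ⊗ₜ[ℤ] (α w y) := by
    rw [smulLeftMap_tmul]
  rw [h1, h2]
  exact Submodule.subset_span ⟨w, op r • x, y, rfl⟩

theorem kalphaRel_le_right (α : Module.End Rᵐᵒᵖ M → Module.End Rᵐᵒᵖ M) (r : R) :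
    kalphaRel α ≤ (kalphaRel α).comap (smulRightMap (M := M) r) := by
  rw [kalphaRel, Submodule.span_le]
  rintro _ ⟨w, x, y, rfl⟩
  rw [SetLike.mem_coe, Submodule.mem_comap, map_sub]
  have h1 : smulRightMap (M := M) r ((w x) ⊗ₜ[ℤ] y) = (w x) ⊗ₜ[ℤ] (op r • y) := by
    rw [smulRightMap_tmul]
  have h2 : smulRightMap (M := M) r (x ⊗ₜ[ℤ] (α w y)) = x ⊗ₜ[ℤ] (α w (op r • y)) := by
    rw [smulRightMap_tmul, map_smul]
  rw [h1, h2]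
  exact Submodule.subset_span ⟨w, x, op r • y, rfl⟩

/-- The `m0`-action on `K_α`. -/
noncomputable def kSmul0 (α : Module.End Rᵐᵒᵖ M → Module.End Rᵐᵒᵖ M) (r : R) :
    Kalpha α →ₗ[ℤ] Kalpha α :=
  Submodule.mapQ _ _ (smulLeftMap r) (kalphaRel_le_left α r)

/-- The `m1`-action on `K_α`. -/
noncomputable def kSmul1 (α : Module.End Rᵐᵒᵖ M → Module.End Rᵐᵒᵖ M) (r : R) :
    Kalpha α →ₗ[ℤ] Kalpha α :=
  Submodule.mapQ _ _ (smulRightMap r) (kalphaRel_le_right α r)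

theorem kSmul0_mk (α : Module.End Rᵐᵒᵖ M → Module.End Rᵐᵒᵖ M) (r : R) (t : M ⊗[ℤ] M) :
    kSmul0 α r (Submodule.Quotient.mk t) = Submodule.Quotient.mk (smulLeftMap r t) := rfl

theorem kSmul1_mk (α : Module.End Rᵐᵒᵖ M → Module.End Rᵐᵒᵖ M) (r : R) (t : M ⊗[ℤ] M) :
    kSmul1 α r (Submodule.Quotient.mk t) = Submodule.Quotient.mk (smulRightMap r t) := rfl

/-- The double `R`-module structure on `K_α`. -/
noncomputable def KalphaDM (α : Module.End Rᵐᵒᵖ M → Module.End Rᵐᵒᵖ M) :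
    DoubleModule R (Kalpha α) where
  m0 k r := kSmul0 α r k
  m1 k r := kSmul1 α r k
  m0_add_left k k' r := map_add _ k k'
  m0_add_right := by
    intro k r r'
    induction k using Submodule.Quotient.induction_on with
    | _ t =>
      rw [kSmul0_mk, kSmul0_mk, kSmul0_mk, ← Submodule.Quotient.mk_add]
      congr 1
      induction t with
      | zero => simp
      | tmul x y => simp [smulLeftMap_tmul, op_add, add_smul, TensorProduct.add_tmul]
      | add a b ha hb => rw [map_add, map_add, map_add, ha, hb]; abel
  m0_mul := by
    intro k r r'
    induction k using Submodule.Quotient.induction_on with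
    | _ t =>
      rw [kSmul0_mk, kSmul0_mk, kSmul0_mk]
      congr 1
      induction t with
      | zero => simp
      | tmul x y => simp [smulLeftMap_tmul, op_mul, mul_smul]
      | add a b ha hb => rw [map_add, map_add, map_add, ha, hb]
  m0_one := by
    intro k
    induction k using Submodule.Quotient.induction_on with
    | _ t =>
      rw [kSmul0_mk]
      congr 1
      induction t with
      | zero => simp
      | tmul x y => simp [smulLeftMap_tmul]
      | add a b ha hb => rw [map_add, ha, hb]
  m1_add_left k k' r := map_add _ k k'
  m1_add_right := by
    intro k r r'
    induction k using Submodule.Quotient.induction_on with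
    | _ t =>
      rw [kSmul1_mk, kSmul1_mk, kSmul1_mk, ← Submodule.Quotient.mk_add]
      congr 1
      induction t with
      | zero => simp
      | tmul x y => simp [smulRightMap_tmul, op_add, add_smul, TensorProduct.tmul_add]
      | add a b ha hb => rw [map_add, map_add, map_add, ha, hb]; abel
  m1_mul := by
    intro k r r'
    induction k using Submodule.Quotient.induction_on with
    | _ t =>
      rw [kSmul1_mk, kSmul1_mk, kSmul1_mk]
      congr 1
      induction t with
      | zero => simp
      | tmul x y => simp [smulRightMap_tmul, op_mul, mul_smul]
      | add a b ha hb => rw [map_add, map_add, map_add, ha, hb]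
  m1_one := by
    intro k
    induction k using Submodule.Quotient.induction_on with
    | _ t =>
      rw [kSmul1_mk]
      congr 1
      induction t with
      | zero => simp
      | tmul x y => simp [smulRightMap_tmul]
      | add a b ha hb => rw [map_add, ha, hb]
  comm := by
    intro k a c
    induction k using Submodule.Quotient.induction_on with
    | _ t =>
      rw [kSmul0_mk, kSmul1_mk, kSmul1_mk, kSmul0_mk]
      congr 1
      induction t with
      | zero => simp
      | tmul x y => simp [smulLeftMap_tmul, smulRightMap_tmul]
      | add p q hp hq => rw [map_add, map_add, map_add, map_add, hp, hq]

/-- The universal general bilinear form `b_α : M × M → K_α`. -/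
noncomputable def balpha (α : Module.End Rᵐᵒᵖ M → Module.End Rᵐᵒᵖ M) :
    GBF R M (Kalpha α) (KalphaDM α) where
  b x y := Submodule.Quotient.mk (x ⊗ₜ[ℤ] y)
  add_left x x' y := by
    rw [TensorProduct.add_tmul, Submodule.Quotient.mk_add]
  add_right x y y' := by
    rw [TensorProduct.tmul_add, Submodule.Quotient.mk_add]
  smul_left x y r := by
    show _ = kSmul0 α r (Submodule.Quotient.mk (x ⊗ₜ[ℤ] y))
    rw [kSmul0_mk]
    congr 1
  smul_right x y r := by
    show _ = kSmul1 α r (Submodule.Quotient.mk (x ⊗ₜ[ℤ] y))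
    rw [kSmul1_mk]
    congr 1

end Kalpha

end Core

section ThetaAux

variable {R : Type u} [Ring R] {M : Type v} [AddCommGroup M] [Module Rᵐᵒᵖ M]

/-- An `R`-endomorphism of `M` viewed as a `ℤ`-linear map. -/
noncomputable def endoZ (w : Module.End Rᵐᵒᵖ M) : M →ₗ[ℤ] M :=
  w.toAddMonoidHom.toIntLinearMap

@[simp] theorem endoZ_apply (w : Module.End Rᵐᵒᵖ M) (x : M) : endoZ w x = w x := rfl

/-- The map `x ⊗ y ↦ y ⊗ (w x)` on `M ⊗_ℤ M`. -/
noncomputable def thetaT (w : Module.End Rᵐᵒᵖ M) : (M ⊗[ℤ] M) →ₗ[ℤ] (M ⊗[ℤ] M) :=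
  (TensorProduct.map LinearMap.id (endoZ w)).comp (TensorProduct.comm ℤ M M).toLinearMap

/-- The map `x ⊗ y ↦ (w y) ⊗ x` on `M ⊗_ℤ M`. -/
noncomputable def thetaT' (w : Module.End Rᵐᵒᵖ M) : (M ⊗[ℤ] M) →ₗ[ℤ] (M ⊗[ℤ] M) :=
  (TensorProduct.map (endoZ w) LinearMap.id).comp (TensorProduct.comm ℤ M M).toLinearMap

@[simp] theorem thetaT_tmul (w : Module.End Rᵐᵒᵖ M) (x y : M) :
    thetaT w (x ⊗ₜ[ℤ] y) = y ⊗ₜ[ℤ] (w x) := rfl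

@[simp] theorem thetaT'_tmul (w : Module.End Rᵐᵒᵖ M) (x y : M) :
    thetaT' w (x ⊗ₜ[ℤ] y) = (w y) ⊗ₜ[ℤ] x := rfl

@[simp] theorem unit_inv_apply_apply (u : (Module.End Rᵐᵒᵖ M)ˣ) (x : M) :
    (↑u⁻¹ : Module.End Rᵐᵒᵖ M) ((↑u : Module.End Rᵐᵒᵖ M) x) = x := by
  rw [← Module.End.mul_apply, u.inv_mul, Module.End.one_apply]

@[simp] theorem unit_apply_inv_apply (u : (Module.End Rᵐᵒᵖ M)ˣ) (x : M) :
    (↑u : Module.End Rᵐᵒᵖ M) ((↑u⁻¹ : Module.End Rᵐᵒᵖ M) x) = x := by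
  rw [← Module.End.mul_apply, u.mul_inv, Module.End.one_apply]

variable (α : Module.End Rᵐᵒᵖ M → Module.End Rᵐᵒᵖ M) (u : (Module.End Rᵐᵒᵖ M)ˣ)

theorem theta_le (hu : ∀ w, α (α w) = ↑u * w * ↑u⁻¹) :
    kalphaRel α ≤ (kalphaRel α).comap (thetaT (M := M) (↑u : Module.End Rᵐᵒᵖ M)) := by
  rw [kalphaRel, Submodule.span_le]
  rintro _ ⟨w, x, y, rfl⟩
  rw [SetLike.mem_coe, Submodule.mem_comap, map_sub, thetaT_tmul, thetaT_tmul]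
  have h : y ⊗ₜ[ℤ] ((↑u : Module.End Rᵐᵒᵖ M) (w x))
        - (α w y) ⊗ₜ[ℤ] ((↑u : Module.End Rᵐᵒᵖ M) x)
      = -(((α w) y) ⊗ₜ[ℤ] ((↑u : Module.End Rᵐᵒᵖ M) x)
          - y ⊗ₜ[ℤ] (α (α w) ((↑u : Module.End Rᵐᵒᵖ M) x))) := by
    rw [hu w]
    have h2 : ((↑u : Module.End Rᵐᵒᵖ M) * w * ↑u⁻¹) ((↑u : Module.End Rᵐᵒᵖ M) x)
        = (↑u : Module.End Rᵐᵒᵖ M) (w x) := by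
      simp [Module.End.mul_apply]
    rw [h2]
    abel
  rw [h]
  exact Submodule.neg_mem _ (Submodule.subset_span ⟨α w, y, (↑u : Module.End Rᵐᵒᵖ M) x, rfl⟩)

theorem theta'_le (hmul : ∀ a b, α (a * b) = α b * α a)
    (hu : ∀ w, α (α w) = ↑u * w * ↑u⁻¹)
    (hkey : ∀ w, α (↑u⁻¹ : Module.End Rᵐᵒᵖ M) * w
      = ↑u * w * ↑u⁻¹ * α (↑u⁻¹ : Module.End Rᵐᵒᵖ M)) :
    kalphaRel α ≤ (kalphaRel α).comap (thetaT' (M := M) (↑u⁻¹ : Module.End Rᵐᵒᵖ M)) := by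
  rw [kalphaRel, Submodule.span_le]
  rintro _ ⟨w, x, y, rfl⟩
  rw [SetLike.mem_coe, Submodule.mem_comap, map_sub, thetaT'_tmul, thetaT'_tmul]
  set ui : Module.End Rᵐᵒᵖ M := (↑u⁻¹ : Module.End Rᵐᵒᵖ M) with hui
  have g1 : (ui y) ⊗ₜ[ℤ] (w x) - y ⊗ₜ[ℤ] (α ui (w x)) ∈ kalphaRel α :=
    Submodule.subset_span ⟨ui, y, w x, rfl⟩
  have g2 : ((ui * α w) y) ⊗ₜ[ℤ] x - y ⊗ₜ[ℤ] (α (ui * α w) x) ∈ kalphaRel α :=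
    Submodule.subset_span ⟨ui * α w, y, x, rfl⟩
  have e1 : (ui * α w) y = ui (α w y) := rfl
  have e2 : α (ui * α w) x = α ui (w x) := by
    rw [hmul, hu w, ← hkey w, Module.End.mul_apply]
  rw [e1, e2] at g2
  have h3 : (ui y) ⊗ₜ[ℤ] (w x) - (ui (α w y)) ⊗ₜ[ℤ] x
      = ((ui y) ⊗ₜ[ℤ] (w x) - y ⊗ₜ[ℤ] (α ui (w x)))
        - ((ui (α w y)) ⊗ₜ[ℤ] x - y ⊗ₜ[ℤ] (α ui (w x))) := by abel
  rw [h3]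
  exact Submodule.sub_mem _ g1 g2

/-- The anti-automorphism `θ : K_α → K_α`, `x ⊗ y ↦ y ⊗ (u x)`. -/
noncomputable def thetaQ (hu : ∀ w, α (α w) = ↑u * w * ↑u⁻¹) :
    Kalpha α →ₗ[ℤ] Kalpha α :=
  Submodule.mapQ _ _ (thetaT (↑u : Module.End Rᵐᵒᵖ M)) (theta_le α u hu)

/-- The inverse anti-automorphism `θ' : K_α → K_α`, `x ⊗ y ↦ (u⁻¹ y) ⊗ x`. -/
noncomputable def theta'Q (hmul : ∀ a b, α (a * b) = α b * α a)
    (hu : ∀ w, α (α w) = ↑u * w * ↑u⁻¹)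
    (hkey : ∀ w, α (↑u⁻¹ : Module.End Rᵐᵒᵖ M) * w
      = ↑u * w * ↑u⁻¹ * α (↑u⁻¹ : Module.End Rᵐᵒᵖ M)) :
    Kalpha α →ₗ[ℤ] Kalpha α :=
  Submodule.mapQ _ _ (thetaT' (↑u⁻¹ : Module.End Rᵐᵒᵖ M)) (theta'_le α u hmul hu hkey)

variable (hmul : ∀ a b, α (a * b) = α b * α a)
  (hu : ∀ w, α (α w) = ↑u * w * ↑u⁻¹)
  (hkey : ∀ w, α (↑u⁻¹ : Module.End Rᵐᵒᵖ M) * w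
    = ↑u * w * ↑u⁻¹ * α (↑u⁻¹ : Module.End Rᵐᵒᵖ M))

theorem thetaQ_mk (t : M ⊗[ℤ] M) :
    thetaQ α u hu (Submodule.Quotient.mk t) = Submodule.Quotient.mk (thetaT (↑u : Module.End Rᵐᵒᵖ M) t) := rfl

theorem theta'Q_mk (t : M ⊗[ℤ] M) :
    theta'Q α u hmul hu hkey (Submodule.Quotient.mk t)
      = Submodule.Quotient.mk (thetaT' (↑u⁻¹ : Module.End Rᵐᵒᵖ M) t) := rfl

theorem thetaQ_b (x y : M) :
    thetaQ α u hu ((balpha (M := M) α).b x y)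
      = (balpha (M := M) α).b y ((↑u : Module.End Rᵐᵒᵖ M) x) := rfl

theorem theta'Q_b (x y : M) :
    theta'Q α u hmul hu hkey ((balpha (M := M) α).b x y)
      = (balpha (M := M) α).b ((↑u⁻¹ : Module.End Rᵐᵒᵖ M) y) x := rfl

theorem thetaQ_theta'Q (k : Kalpha α) :
    thetaQ α u hu (theta'Q α u hmul hu hkey k) = k := by
  induction k using Submodule.Quotient.induction_on with
  | _ t =>
    rw [theta'Q_mk, thetaQ_mk]
    congr 1
    induction t with
    | zero => simp
    | tmul x y => simp
    | add a b ha hb => rw [map_add, map_add, ha, hb]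

theorem theta'Q_thetaQ (k : Kalpha α) :
    theta'Q α u hmul hu hkey (thetaQ α u hu k) = k := by
  induction k using Submodule.Quotient.induction_on with
  | _ t =>
    rw [thetaQ_mk, theta'Q_mk]
    congr 1
    induction t with
    | zero => simp
    | tmul x y => simp
    | add a b ha hb => rw [map_add, map_add, ha, hb]

theorem thetaQ_m0 (k : Kalpha α) (r : R) :
    thetaQ α u hu ((KalphaDM α).m0 k r) = (KalphaDM α).m1 (thetaQ α u hu k) r := by
  induction k using Submodule.Quotient.induction_on with
  | _ t =>
    show thetaQ α u hu (kSmul0 α r (Submodule.Quotient.mk t))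
      = kSmul1 α r (thetaQ α u hu (Submodule.Quotient.mk t))
    rw [kSmul0_mk, thetaQ_mk, thetaQ_mk, kSmul1_mk]
    congr 1
    induction t with
    | zero => simp
    | tmul x y => simp [smulLeftMap_tmul, smulRightMap_tmul]
    | add a b ha hb =>
      rw [map_add, map_add, map_add, map_add, ha, hb]

theorem theta'Q_m1 (k : Kalpha α) (r : R) :
    theta'Q α u hmul hu hkey ((KalphaDM α).m1 k r)
      = (KalphaDM α).m0 (theta'Q α u hmul hu hkey k) r := by
  induction k using Submodule.Quotient.induction_on with
  | _ t =>
    show theta'Q α u hmul hu hkey (kSmul1 α r (Submodule.Quotient.mk t))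
      = kSmul0 α r (theta'Q α u hmul hu hkey (Submodule.Quotient.mk t))
    rw [kSmul1_mk, theta'Q_mk, theta'Q_mk, kSmul0_mk]
    congr 1
    induction t with
    | zero => simp
    | tmul x y => simp [smulLeftMap_tmul, smulRightMap_tmul]
    | add a b ha hb =>
      rw [map_add, map_add, map_add, map_add, ha, hb]

end ThetaAux

/-- If `α ∘ α` is an inner automorphism of `W = End_R(M)`, then `b_α` is
right regular iff left regular, and right injective iff left injective. -/
theorem stmt_5 {R : Type u} [Ring R] {M : Type v} [AddCommGroup M] [Module Rᵐᵒᵖ M]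
    (α : Module.End Rᵐᵒᵖ M → Module.End Rᵐᵒᵖ M) (hα : IsAntiEndo α)
    (hinner : IsInnerAut (α ∘ α)) :
    ((balpha (M := M) α).RightRegular ↔ (balpha (M := M) α).LeftRegular) ∧
    ((balpha (M := M) α).RightInjective ↔ (balpha (M := M) α).LeftInjective) := by
  obtain ⟨haddα, honeα, hmulα⟩ := hα
  obtain ⟨u, hu'⟩ := hinner
  have hu : ∀ w, α (α w) = ↑u * w * ↑u⁻¹ := fun w => hu' w
  have hsurj : Function.Surjective α := by
    have hs : Function.Surjective (α ∘ α) := by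
      intro w
      refine ⟨↑u⁻¹ * w * ↑u, ?_⟩
      rw [hu']
      simp only [mul_assoc, Units.mul_inv_cancel_left]
      rw [u.mul_inv, mul_one]
    exact Function.Surjective.of_comp hs
  have hαinv : α (↑u : Module.End Rᵐᵒᵖ M) * α (↑u⁻¹ : Module.End Rᵐᵒᵖ M) = 1 := by
    rw [← hmulα, u.inv_mul, honeα]
  have hkey : ∀ w, α (↑u⁻¹ : Module.End Rᵐᵒᵖ M) * w
      = ↑u * w * ↑u⁻¹ * α (↑u⁻¹ : Module.End Rᵐᵒᵖ M) := by
    intro w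
    obtain ⟨v, rfl⟩ := hsurj w
    have B : (↑u : Module.End Rᵐᵒᵖ M) * α v * ↑u⁻¹
        = α (↑u⁻¹ : Module.End Rᵐᵒᵖ M) * (α v * α (↑u : Module.End Rᵐᵒᵖ M)) := by
      rw [← hu (α v), hu v, hmulα, hmulα]
    rw [B]
    simp only [mul_assoc, hαinv, mul_one]
  set θ := thetaQ α u hu with hθ
  set θ' := theta'Q α u hmulα hu hkey with hθ'
  have θb : ∀ x y : M, θ ((balpha (M := M) α).b x y)
      = (balpha (M := M) α).b y ((↑u : Module.End Rᵐᵒᵖ M) x) := thetaQ_b α u hu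
  have θ'b : ∀ x y : M, θ' ((balpha (M := M) α).b x y)
      = (balpha (M := M) α).b ((↑u⁻¹ : Module.End Rᵐᵒᵖ M) y) x :=
    theta'Q_b α u hmulα hu hkey
  have θθ' : ∀ k, θ (θ' k) = k := thetaQ_theta'Q α u hmulα hu hkey
  have θ'θ : ∀ k, θ' (θ k) = k := theta'Q_thetaQ α u hmulα hu hkey
  have θm0 : ∀ (k : Kalpha α) (r : R),
      θ ((KalphaDM α).m0 k r) = (KalphaDM α).m1 (θ k) r := thetaQ_m0 α u hu
  have θ'm1 : ∀ (k : Kalpha α) (r : R),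
      θ' ((KalphaDM α).m1 k r) = (KalphaDM α).m0 (θ' k) r :=
    theta'Q_m1 α u hmulα hu hkey
  have inj : (balpha (M := M) α).RightInjective ↔ (balpha (M := M) α).LeftInjective := by
    constructor
    · intro hRI x x' h
      apply hRI
      intro y
      have h2 := congrArg θ' (h ((↑u : Module.End Rᵐᵒᵖ M) y))
      rw [θ'b, θ'b, unit_inv_apply_apply] at h2
      exact h2
    · intro hLI x x' h
      apply hLI
      intro y
      have h2 := congrArg θ (h ((↑u⁻¹ : Module.End Rᵐᵒᵖ M) y))
      rw [θb, θb, unit_apply_inv_apply] at h2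
      exact h2
  refine ⟨?_, inj⟩
  constructor
  · rintro ⟨hRI, hRS⟩
    refine ⟨inj.mp hRI, ?_⟩
    intro f hfadd hfsm
    obtain ⟨x, hx⟩ := hRS (fun y => θ' (f ((↑u : Module.End Rᵐᵒᵖ M) y)))
      (fun y y' => by simp only [map_add, hfadd])
      (fun y r => by simp only [map_smul, hfsm, θ'm1])
    refine ⟨x, fun y => ?_⟩
    have h := congrArg θ (hx ((↑u⁻¹ : Module.End Rᵐᵒᵖ M) y))
    rw [θθ', θb, unit_apply_inv_apply] at h
    exact h
  · rintro ⟨hLI, hLS⟩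
    refine ⟨inj.mpr hLI, ?_⟩
    intro f hfadd hfsm
    obtain ⟨x, hx⟩ := hLS (fun y => θ (f ((↑u⁻¹ : Module.End Rᵐᵒᵖ M) y)))
      (fun y y' => by simp only [map_add, hfadd])
      (fun y r => by simp only [map_smul, hfsm, θm0])
    refine ⟨x, fun y => ?_⟩
    have h := congrArg θ' (hx ((↑u : Module.End Rᵐᵒᵖ M) y))
    rw [θ'θ, θ'b, unit_inv_apply_apply] at h
    exact h
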